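/- Let R be a local ring, x a non-zerodivisor, S = R/(x^n). Suppose 0 → M' → M → M'' → 0 is a short exact sequence of reflexive S-modules that is also dual exact, and that pd_R M' ≤ 1 (i.e., the first R-syzygy Z' of M' is R-free). Then the induced short exact sequence of first R-syzygies 0 → Z' → Z → Z'' → 0 is split exact. -/

import Mathlib

lemma div_lemma {R A : Type} [CommRing R] [AddCommGroup A] [Module R A]
    {c : R} (hc : c ∈ nonZeroDivisors R) (L : A →ₗ[R] R)
    (hL : ∀ a, ∃ b, L a = c * b) :
    ∃ D : A →ₗ[R] R, ∀ a, c * D a = L a := by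
  set m : R →ₗ[R] R := c • (LinearMap.id : R →ₗ[R] R) with hm
  have hmap : ∀ b, m b = c * b := by intro b; simp [hm]
  have hinj : Function.Injective m := by
    intro a b hab
    rw [hmap, hmap] at hab
    have h0 : (a - b) * c = 0 := by ring_nf; linear_combination hab
    have := hc.2 _ h0
    exact sub_eq_zero.mp this
  have hmem : ∀ a, L a ∈ LinearMap.range m := by
    intro a
    obtain ⟨b, hb⟩ := hL a
    exact ⟨b, by rw [hmap, hb]⟩
  refine ⟨(LinearEquiv.ofInjective m hinj).symm.toLinearMap.comp
    (L.codRestrict (LinearMap.range m) hmem), fun a => ?_⟩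
  have : m ((LinearEquiv.ofInjective m hinj).symm (L.codRestrict (LinearMap.range m) hmem a)) = L a := by
    have := (LinearEquiv.ofInjective m hinj).apply_symm_apply (L.codRestrict (LinearMap.range m) hmem a)
    calc m ((LinearEquiv.ofInjective m hinj).symm (L.codRestrict (LinearMap.range m) hmem a))
        = ((LinearEquiv.ofInjective m hinj) ((LinearEquiv.ofInjective m hinj).symm (L.codRestrict (LinearMap.range m) hmem a)) : R) := rfl
      _ = L a := by rw [this]; rfl
  rw [← hmap]; exact this

theorem stmt15 (R : Type) [CommRing R] [IsNoetherianRing R] [IsLocalRing R]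
    (x : R) (hx : x ∈ nonZeroDivisors R) (n : ℕ) (hn : 0 < n)
    (M' M M'' : Type)
    [AddCommGroup M'] [AddCommGroup M] [AddCommGroup M'']
    [Module R M'] [Module R M] [Module R M'']
    [Module (R ⧸ Ideal.span {x ^ n}) M'] [IsScalarTower R (R ⧸ Ideal.span {x ^ n}) M']
    [Module (R ⧸ Ideal.span {x ^ n}) M] [IsScalarTower R (R ⧸ Ideal.span {x ^ n}) M]
    [Module (R ⧸ Ideal.span {x ^ n}) M''] [IsScalarTower R (R ⧸ Ideal.span {x ^ n}) M'']
    [Module.Finite (R ⧸ Ideal.span {x ^ n}) M']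
    [Module.Finite (R ⧸ Ideal.span {x ^ n}) M]
    [Module.Finite (R ⧸ Ideal.span {x ^ n}) M'']
    [Module.IsReflexive (R ⧸ Ideal.span {x ^ n}) M']
    [Module.IsReflexive (R ⧸ Ideal.span {x ^ n}) M]
    [Module.IsReflexive (R ⧸ Ideal.span {x ^ n}) M'']
    (α : M' →ₗ[R ⧸ Ideal.span {x ^ n}] M) (β : M →ₗ[R ⧸ Ideal.span {x ^ n}] M'')
    (hα : Function.Injective α) (hβ : Function.Surjective β)
    (hαβ : Function.Exact α β)
    -- the sequence is dual exact:
    (hdual : Function.Surjective α.dualMap ∧ Function.Injective β.dualMap ∧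
      Function.Exact β.dualMap α.dualMap)
    -- split exact sequence of finite free `R`-modules above it:
    (F' F F'' : Type)
    [AddCommGroup F'] [AddCommGroup F] [AddCommGroup F'']
    [Module R F'] [Module R F] [Module R F'']
    [Module.Free R F'] [Module.Free R F] [Module.Free R F'']
    [Module.Finite R F'] [Module.Finite R F] [Module.Finite R F'']
    (u : F' →ₗ[R] F) (v : F →ₗ[R] F'')
    (hu : Function.Injective u) (hv : Function.Surjective v) (huv : Function.Exact u v)
    (hsplitrow : ∃ s : F'' →ₗ[R] F, v.comp s = LinearMap.id)
    (π' : F' →ₗ[R] M') (π : F →ₗ[R] M) (π'' : F'' →ₗ[R] M'')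
    (hπ' : Function.Surjective π') (hπ : Function.Surjective π)
    (hπ'' : Function.Surjective π'')
    (hcomm₁ : π.comp u = (α.restrictScalars R).comp π')
    (hcomm₂ : π''.comp v = (β.restrictScalars R).comp π)
    -- the induced short exact sequence of syzygies:
    (j : (LinearMap.ker π') →ₗ[R] (LinearMap.ker π))
    (q : (LinearMap.ker π) →ₗ[R] (LinearMap.ker π''))
    (hj : ∀ z : LinearMap.ker π', ((j z : F)) = u (z : F'))
    (hq : ∀ z : LinearMap.ker π, ((q z : F'')) = v (z : F))
    (hjinj : Function.Injective j) (hqsurj : Function.Surjective q)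
    (hjq : Function.Exact j q)
    -- `pd_R M' ≤ 1`, i.e. the first syzygy `Z'` of `M'` is `R`-free:
    (hZ'free : Module.Free R (LinearMap.ker π')) :
    ∃ σ : (LinearMap.ker π) →ₗ[R] (LinearMap.ker π'), σ.comp j = LinearMap.id := by
  classical
  have hxn : x ^ n ∈ nonZeroDivisors R := pow_mem hx n
  have hmk0 : ∀ a : R, Ideal.Quotient.mk (Ideal.span {x ^ n}) a = 0 → ∃ b, a = x ^ n * b := by
    intro a ha
    have : a ∈ Ideal.span {x ^ n} := Ideal.Quotient.eq_zero_iff_mem.mp ha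
    rw [Ideal.mem_span_singleton] at this
    exact this
  -- the R-linear quotient map
  set mkL : R →ₗ[R] (R ⧸ Ideal.span {x ^ n}) := Algebra.linearMap R (R ⧸ Ideal.span {x ^ n})
    with hmkL
  have hmkLa : ∀ a : R, mkL a = Ideal.Quotient.mk (Ideal.span {x ^ n}) a := by
    intro a
    rw [hmkL, Algebra.linearMap_apply, Ideal.Quotient.algebraMap_eq]
  -- x^n kills M'
  have hkill : ∀ m : M', (x ^ n : R) • m = 0 := by
    intro m
    rw [← algebraMap_smul (R ⧸ Ideal.span {x ^ n}) (x ^ n) m, Ideal.Quotient.algebraMap_eq]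
    have : (Ideal.Quotient.mk (Ideal.span {x ^ n})) (x ^ n) = 0 :=
      Ideal.Quotient.eq_zero_iff_mem.mpr (Ideal.subset_span rfl)
    rw [this, zero_smul]
  -- multiplication by x^n maps F' into Z' = ker π'
  have hL1mem : ∀ f : F', ((x ^ n : R) • (LinearMap.id : F' →ₗ[R] F')) f ∈ LinearMap.ker π' := by
    intro f
    simp only [LinearMap.smul_apply, LinearMap.id_apply, LinearMap.mem_ker, map_smul]
    exact hkill _
  set L1 : F' →ₗ[R] LinearMap.ker π' :=
    LinearMap.codRestrict (LinearMap.ker π') ((x ^ n : R) • LinearMap.id) hL1mem with hL1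
  have hL1a : ∀ f : F', (L1 f : F') = (x ^ n : R) • f := by
    intro f; simp [hL1, LinearMap.codRestrict_apply]
  -- the retraction r : F → F'
  obtain ⟨s, hs⟩ := hsplitrow
  have hvs : ∀ y, v (s y) = y := fun y => LinearMap.congr_fun hs y
  set p : F →ₗ[R] F := (LinearMap.id : F →ₗ[R] F) - s ∘ₗ v with hp
  have hpa : ∀ f, p f = f - s (v f) := by
    intro f; simp [hp, LinearMap.sub_apply]
  have hpmem : ∀ f : F, p f ∈ LinearMap.range u := by
    intro f
    have hv0 : v (p f) = 0 := by
      rw [hpa]; simp [hvs]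
    have := (huv (p f)).mp hv0
    simpa [LinearMap.mem_range] using this
  set r : F →ₗ[R] F' := (LinearEquiv.ofInjective u hu).symm.toLinearMap.comp
    (p.codRestrict (LinearMap.range u) hpmem) with hr
  have hur : ∀ f : F, u (r f) = f - s (v f) := by
    intro f
    have h1 : (LinearEquiv.ofInjective u hu) (r f) = (p.codRestrict (LinearMap.range u) hpmem) f := by
      rw [hr]
      exact (LinearEquiv.ofInjective u hu).apply_symm_apply _
    have h2 : u (r f) = ((LinearEquiv.ofInjective u hu) (r f) : F) :=
      (LinearEquiv.ofInjective_apply u (r f)).symm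
    rw [h2, h1, LinearMap.codRestrict_apply, hpa]
  have hru : ∀ z : F', r (u z) = z := by
    intro z
    apply hu
    rw [hur]
    have hvu : v (u z) = 0 := (huv (u z)).mpr ⟨z, rfl⟩
    simp [hvu]
  -- commutativity, elementwise
  have hc1 : ∀ f : F', π (u f) = α (π' f) := fun f => LinearMap.congr_fun hcomm₁ f
  -- key extension lemma: every functional on Z' extends to Z along j
  have key : ∀ φ : (LinearMap.ker π') →ₗ[R] R,
      ∃ Φ : (LinearMap.ker π) →ₗ[R] R, ∀ z, Φ (j z) = φ z := by
    intro φ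
    -- Ψ : F' → S
    set Ψ : F' →ₗ[R] (R ⧸ Ideal.span {x ^ n}) := mkL ∘ₗ φ ∘ₗ L1 with hΨ
    have hΨker : LinearMap.ker π' ≤ LinearMap.ker Ψ := by
      intro z hz
      have hz' : (L1 z : F') = ((x ^ n : R) • (⟨z, hz⟩ : LinearMap.ker π') : F') := by
        rw [hL1a]
      have hzz : L1 z = (x ^ n : R) • (⟨z, hz⟩ : LinearMap.ker π') := Subtype.ext hz'
      simp only [LinearMap.mem_ker, hΨ, LinearMap.comp_apply, hzz, map_smul, hmkLa]
      rw [smul_eq_mul]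
      exact Ideal.Quotient.eq_zero_iff_mem.mpr
        (Ideal.mul_mem_right _ _ (Ideal.subset_span rfl))
    -- factor through M'
    set e := π'.quotKerEquivOfSurjective hπ' with he
    set ψR : M' →ₗ[R] (R ⧸ Ideal.span {x ^ n}) :=
      ((LinearMap.ker π').liftQ Ψ hΨker).comp e.symm.toLinearMap with hψR
    have hψRa : ∀ f : F', ψR (π' f) = Ψ f := by
      intro f
      have h1 : e (Submodule.Quotient.mk f) = π' f := rfl
      have h2 : e.symm (π' f) = Submodule.Quotient.mk f := by
        rw [← h1, LinearEquiv.symm_apply_apply]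
      simp [hψR, h2, Submodule.liftQ_apply]
    -- upgrade to S-linear ψ
    set ψ : Module.Dual (R ⧸ Ideal.span {x ^ n}) M' :=
      { toFun := ψR
        map_add' := ψR.map_add
        map_smul' := by
          intro c m
          obtain ⟨a, rfl⟩ := Ideal.Quotient.mk_surjective c
          have h1 : (Ideal.Quotient.mk (Ideal.span {x ^ n}) a) • m = a • m := by
            rw [← Ideal.Quotient.algebraMap_eq, algebraMap_smul]
          have h2 : (Ideal.Quotient.mk (Ideal.span {x ^ n}) a) • (ψR m) = a • (ψR m) := by
            rw [← Ideal.Quotient.algebraMap_eq, algebraMap_smul]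
          simp only [RingHom.id_apply, h1, h2, map_smul] } with hψ
    have hψa : ∀ m : M', ψ m = ψR m := fun m => rfl
    -- dual exactness gives χ
    obtain ⟨χ, hχ⟩ := hdual.1 ψ
    have hχa : ∀ m : M', χ (α m) = ψ m := by
      intro m
      have h := LinearMap.congr_fun hχ m
      simpa [LinearMap.dualMap_apply] using h
    -- lift χ ∘ π to θ : F → R
    set bf := Module.Free.chooseBasis R F with hbf
    set g : Module.Free.ChooseBasisIndex R F → R :=
      fun k => (Ideal.Quotient.mk_surjective (χ (π (bf k)))).choose with hg
    set θ : F →ₗ[R] R := Module.Basis.constr bf ℕ g with hθ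
    have hθa : ∀ f : F, Ideal.Quotient.mk (Ideal.span {x ^ n}) (θ f) = χ (π f) := by
      have hLL : mkL.comp θ = ((χ.restrictScalars R).comp π) := by
        apply Module.Basis.ext bf
        intro k
        simp only [LinearMap.comp_apply, hθ, Module.Basis.constr_basis, hmkLa,
          LinearMap.coe_restrictScalars]
        exact (Ideal.Quotient.mk_surjective (χ (π (bf k)))).choose_spec
      intro f
      have := LinearMap.congr_fun hLL f
      simpa [hmkLa] using this
    -- divide to get μ : F' → R
    have hL2 : ∀ f : F', ∃ b, (θ ∘ₗ u - φ ∘ₗ L1) f = x ^ n * b := by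
      intro f
      apply hmk0
      have h1 : Ideal.Quotient.mk (Ideal.span {x ^ n}) (θ (u f)) = χ (π (u f)) := hθa (u f)
      have h2 : χ (π (u f)) = ψR (π' f) := by rw [hc1, hχa, hψa]
      have h3 : ψR (π' f) = Ψ f := hψRa f
      simp only [LinearMap.sub_apply, LinearMap.comp_apply, map_sub]
      rw [h1, h2, h3]
      simp [hΨ, hmkLa]
    obtain ⟨μ, hμ⟩ := div_lemma hxn _ hL2
    -- divide to get d : Z → R
    have hL3 : ∀ w : LinearMap.ker π, ∃ b, (θ ∘ₗ (LinearMap.ker π).subtype) w = x ^ n * b := by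
      intro w
      apply hmk0
      rw [LinearMap.comp_apply, Submodule.subtype_apply, hθa]
      have hw : π (w : F) = 0 := w.2
      rw [hw, map_zero]
    obtain ⟨d, hd⟩ := div_lemma hxn _ hL3
    -- the extension
    refine ⟨d - μ ∘ₗ (r ∘ₗ (LinearMap.ker π).subtype), fun z => ?_⟩
    have hjz : ((j z : F)) = u (z : F') := hj z
    have h1 : x ^ n * d (j z) = θ (u (z : F')) := by
      rw [hd (j z)]
      simp [hjz]
    have hruz : r ((j z : F)) = (z : F') := by rw [hjz, hru]
    have h2 : x ^ n * μ (z : F') = θ (u (z : F')) - x ^ n * φ z := by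
      rw [hμ (z : F')]
      have hL1z : L1 (z : F') = (x ^ n : R) • z := by
        apply Subtype.ext
        rw [hL1a]; rfl
      simp only [LinearMap.sub_apply, LinearMap.comp_apply, hL1z, map_smul, smul_eq_mul]
    have hcancel : ∀ a b : R, x ^ n * a = x ^ n * b → a = b := by
      intro a b hab
      have h0 : (a - b) * (x ^ n) = 0 := by ring_nf; linear_combination hab
      exact sub_eq_zero.mp (hxn.2 _ h0)
    apply hcancel
    simp only [LinearMap.sub_apply, LinearMap.comp_apply, Submodule.subtype_apply, hruz]
    rw [mul_sub, h1, h2]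
    ring
  -- assemble the retraction σ using a finite basis of Z'
  haveI := hZ'free
  haveI : Module.Finite R (LinearMap.ker π') :=
    Module.Finite.iff_fg.mpr (IsNoetherian.noetherian _)
  set b := Module.Free.chooseBasis R (LinearMap.ker π') with hb
  choose Φ hΦ using fun i => key (b.coord i)
  refine ⟨∑ i, (Φ i).smulRight (b i), ?_⟩
  apply LinearMap.ext
  intro z
  simp only [LinearMap.comp_apply, LinearMap.id_apply]
  rw [LinearMap.sum_apply]
  simp only [LinearMap.smulRight_apply, hΦ]
  simp only [Module.Basis.coord_apply]
  exact b.sum_repr z
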